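/- Gradient for a general parametrization of the depth-varying parameter: Let S > 0, f : [0,S] × ℝ^{n_z} × ℝ^{n_θ} → ℝ^{n_z} be continuously differentiable, and let the depth-varying parameter be given by a continuously differentiable parametrization θ : [0,S] × ℝ^{n_μ} → ℝ^{n_θ}, (s,μ) ↦ θ(s,μ). Fix μ ∈ ℝ^{n_μ}, suppose z : [0,S] × ℝ^{n_μ} → ℝ^{n_z} is continuously differentiable, solves ∂z/∂s(s,μ) = f(s, z(s,μ), θ(s,μ)) with z(0,μ) = z₀ independent of μ, and the Jacobian v(s) = ∂z(s,μ)/∂μ satisfies v'(s) = (∂f/∂z) v(s) + (∂f/∂θ)(∂θ/∂μ)(s,μ), v(0) = 0 (the Jacobians of f evaluated at (s, z(s,μ), θ(s,μ))). Define ℓ(μ) = L(z(S,μ)) + ∫₀ᔆ l(τ, z(τ,μ)) dτ with L, l continuously differentiable, and let a : [0,S] → ℝ^{n_z} satisfy a'(s)ᵀ = −a(s)ᵀ (∂f/∂z) − (∂l/∂z) with a(S)ᵀ = (∂L/∂z)(z(S,μ)). Then dℓ/dμ = ∫₀ᔆ a(τ)ᵀ (∂f/∂θ)(τ, z(τ,μ),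 θ(τ,μ)) (∂θ/∂μ)(τ,μ) dτ. -/

import Mathlib

open MeasureTheory Matrix

/-- The continuous linear map `w ↦ M *ᵥ w` given by a Jacobian matrix `M`. -/
noncomputable def mvCLM {m n : ℕ} (M : Matrix (Fin m) (Fin n) ℝ) :
    (Fin n → ℝ) →L[ℝ] (Fin m → ℝ) :=
  LinearMap.toContinuousLinearMap M.mulVecLin

/-- The continuous linear functional `w ↦ g ⬝ᵥ w` given by a gradient (row) vector `g`. -/
noncomputable def dotCLM {n : ℕ} (g : Fin n → ℝ) : (Fin n → ℝ) →L[ℝ] ℝ :=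
  LinearMap.toContinuousLinearMap
    { toFun := fun w => g ⬝ᵥ w
      map_add' := by intro x y; simp [dotProduct_add]
      map_smul' := by intro c x; simp [dotProduct_smul] }

attribute [local instance] Matrix.normedAddCommGroup Matrix.normedSpace

lemma mvCLM_apply {m n : ℕ} (M : Matrix (Fin m) (Fin n) ℝ) (w : Fin n → ℝ) :
    mvCLM M w = M *ᵥ w := rfl

lemma dotCLM_apply {n : ℕ} (g w : Fin n → ℝ) : dotCLM g w = g ⬝ᵥ w := rfl

lemma dot_comp_mv {m n : ℕ} (g : Fin m → ℝ) (M : Matrix (Fin m) (Fin n) ℝ) :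
    (dotCLM g).comp (mvCLM M) = dotCLM (g ᵥ* M) := by
  ext w
  simp [dotCLM_apply, mvCLM_apply, Matrix.dotProduct_mulVec]

lemma dotCLM_add {n : ℕ} (x y : Fin n → ℝ) : dotCLM (x + y) = dotCLM x + dotCLM y := by
  ext w; simp [dotCLM_apply, add_dotProduct]

noncomputable def dotCLML (n : ℕ) : (Fin n → ℝ) →L[ℝ] ((Fin n → ℝ) →L[ℝ] ℝ) :=
  LinearMap.toContinuousLinearMap
    { toFun := dotCLM
      map_add' := by intro x y; exact dotCLM_add x y
      map_smul' := by intro c x; ext w; simp [dotCLM_apply, smul_dotProduct] }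

lemma key_algebra {nz nθ nμ : ℕ} (a lz : Fin nz → ℝ) (Fz : Matrix (Fin nz) (Fin nz) ℝ)
    (Fθ : Matrix (Fin nz) (Fin nθ) ℝ) (v : Matrix (Fin nz) (Fin nμ) ℝ)
    (Θ : Matrix (Fin nθ) (Fin nμ) ℝ) :
    (-(a ᵥ* Fz) - lz) ᵥ* v + a ᵥ* (Fz * v + Fθ * Θ) = (a ᵥ* Fθ) ᵥ* Θ - lz ᵥ* v := by
  rw [Matrix.sub_vecMul, Matrix.neg_vecMul, Matrix.vecMul_add, ← Matrix.vecMul_vecMul,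
    ← Matrix.vecMul_vecMul]
  abel


/-- **Gradient for a general parametrization of the depth-varying parameter.**
With the depth-varying parameter given by a continuously differentiable parametrization
`θ(s, μ)` with finite-dimensional parameters `μ`, the gradient of the loss
`ℓ(μ) = L(z(S,μ)) + ∫₀ˢ l(τ, z(τ,μ)) dτ` is
`dℓ/dμ = ∫₀ˢ a(τ)ᵀ (∂f/∂θ)(τ, z(τ,μ), θ(τ,μ)) (∂θ/∂μ)(τ,μ) dτ`, where `a` is the
adjoint state. -/
theorem general_parametrization_gradient
    {nz nθ nμ : ℕ} {S : ℝ} (hS : 0 < S)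
    (f : ℝ → (Fin nz → ℝ) → (Fin nθ → ℝ) → (Fin nz → ℝ))
    (hf : ContDiff ℝ 1 (fun q : ℝ × (Fin nz → ℝ) × (Fin nθ → ℝ) => f q.1 q.2.1 q.2.2))
    -- parametrization of the depth-varying parameter and its Jacobian in `μ`
    (θ : ℝ → (Fin nμ → ℝ) → (Fin nθ → ℝ))
    (hθ : ContDiff ℝ 1 (fun q : ℝ × (Fin nμ → ℝ) => θ q.1 q.2))
    (μ : Fin nμ → ℝ)
    (Θμ : ℝ → Matrix (Fin nθ) (Fin nμ) ℝ)
    (hΘμ : ∀ s ∈ Set.Icc (0:ℝ) S, HasFDerivAt (fun μ' => θ s μ') (mvCLM (Θμ s)) μ)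
    (z : ℝ → (Fin nμ → ℝ) → (Fin nz → ℝ)) (z₀ : Fin nz → ℝ)
    (hz : ContDiff ℝ 1 (fun q : ℝ × (Fin nμ → ℝ) => z q.1 q.2))
    (hode : ∀ s ∈ Set.Icc (0:ℝ) S, HasDerivAt (fun u => z u μ) (f s (z s μ) (θ s μ)) s)
    (hinit : ∀ μ' : Fin nμ → ℝ, z 0 μ' = z₀)
    -- Jacobians of `f` along the solution
    (Fz : ℝ → Matrix (Fin nz) (Fin nz) ℝ) (Fθ : ℝ → Matrix (Fin nz) (Fin nθ) ℝ)
    (hFz : ∀ s ∈ Set.Icc (0:ℝ) S,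
      HasFDerivAt (fun w => f s w (θ s μ)) (mvCLM (Fz s)) (z s μ))
    (hFθ : ∀ s ∈ Set.Icc (0:ℝ) S,
      HasFDerivAt (fun q : Fin nθ → ℝ => f s (z s μ) q) (mvCLM (Fθ s)) (θ s μ))
    -- `v(s) = ∂z(s,μ)/∂μ` satisfies the variational equation with `v 0 = 0`
    (v : ℝ → Matrix (Fin nz) (Fin nμ) ℝ)
    (hv : ∀ s ∈ Set.Icc (0:ℝ) S, HasFDerivAt (fun μ' => z s μ') (mvCLM (v s)) μ)
    (hvar : ∀ s ∈ Set.Icc (0:ℝ) S, HasDerivAt v (Fz s * v s + Fθ s * Θμ s) s)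
    (hv0 : v 0 = 0)
    -- loss functions and their gradients
    (L : (Fin nz → ℝ) → ℝ) (l : ℝ → (Fin nz → ℝ) → ℝ)
    (hL : ContDiff ℝ 1 L)
    (hl : ContDiff ℝ 1 (fun q : ℝ × (Fin nz → ℝ) => l q.1 q.2))
    (Lz : Fin nz → ℝ) (lz : ℝ → (Fin nz → ℝ))
    (hLz : HasFDerivAt L (dotCLM Lz) (z S μ))
    (hlz : ∀ s ∈ Set.Icc (0:ℝ) S, HasFDerivAt (fun w => l s w) (dotCLM (lz s)) (z s μ))
    -- the adjoint state
    (a : ℝ → (Fin nz → ℝ))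
    (ha : ∀ s ∈ Set.Icc (0:ℝ) S, HasDerivAt a (-(a s ᵥ* Fz s) - lz s) s)
    (haS : a S = Lz) :
    HasFDerivAt (fun μ' : Fin nμ → ℝ => L (z S μ') + ∫ τ in (0:ℝ)..S, l τ (z τ μ'))
      (dotCLM (∫ τ in (0:ℝ)..S, (a τ ᵥ* Fθ τ) ᵥ* Θμ τ)) μ := by
  have hIcc : Set.uIcc (0:ℝ) S = Set.Icc 0 S := Set.uIcc_of_le hS.le
  have hSmem : S ∈ Set.Icc (0:ℝ) S := ⟨hS.le, le_rfl⟩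
  -- continuity of the solution path and parameter path
  have cz : Continuous (fun s => z s μ) :=
    hz.continuous.comp (continuous_id.prodMk continuous_const)
  have cθ : Continuous (fun s => θ s μ) :=
    hθ.continuous.comp (continuous_id.prodMk continuous_const)
  -- continuity of a and v on Icc
  have ca : ContinuousOn a (Set.Icc 0 S) :=
    fun s hs => ((ha s hs).continuousAt).continuousWithinAt
  have cv : ContinuousOn v (Set.Icc 0 S) :=
    fun s hs => ((hvar s hs).continuousAt).continuousWithinAt
  -- entrywise continuity of Fθ on Icc via uniqueness of derivatives
  have cFθ : ∀ i k, ContinuousOn (fun s => Fθ s i k) (Set.Icc 0 S) := by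
    intro i k
    set fJ : ℝ × (Fin nz → ℝ) × (Fin nθ → ℝ) → (Fin nz → ℝ) :=
      fun q => f q.1 q.2.1 q.2.2 with hfJ
    set ιθ : (Fin nθ → ℝ) →L[ℝ] ℝ × (Fin nz → ℝ) × (Fin nθ → ℝ) :=
      ContinuousLinearMap.prod 0 (ContinuousLinearMap.prod 0 (ContinuousLinearMap.id ℝ _))
      with hιθ
    have heq : ∀ s ∈ Set.Icc (0:ℝ) S,
        mvCLM (Fθ s) = (fderiv ℝ fJ (s, z s μ, θ s μ)).comp ιθ := by
      intro s hs
      have h1 : HasFDerivAt (fun q : Fin nθ → ℝ => ((s, z s μ, q) : ℝ × (Fin nz → ℝ) × (Fin nθ → ℝ))) ιθ (θ s μ) :=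
        (hasFDerivAt_const s _).prodMk ((hasFDerivAt_const (z s μ) _).prodMk (hasFDerivAt_id _))
      have h2 : HasFDerivAt fJ (fderiv ℝ fJ (s, z s μ, θ s μ)) (s, z s μ, θ s μ) :=
        (hf.differentiable one_ne_zero _).hasFDerivAt
      exact (hFθ s hs).unique (h2.comp (θ s μ) h1 : HasFDerivAt (fJ ∘ fun q : Fin nθ → ℝ => ((s, z s μ, q) : ℝ × (Fin nz → ℝ) × (Fin nθ → ℝ))) _ (θ s μ))
    have ccont : Continuous (fun s => ((fderiv ℝ fJ (s, z s μ, θ s μ)).comp ιθ)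
        (Pi.single k 1) i) := by
      apply (continuous_apply i).comp
      exact (((hf.continuous_fderiv one_ne_zero).comp
        (continuous_id.prodMk (cz.prodMk cθ))).clm_comp continuous_const).clm_apply
        continuous_const
    refine ContinuousOn.congr ccont.continuousOn ?_
    intro s hs
    have := heq s hs
    have h3 : mvCLM (Fθ s) (Pi.single k 1) i
        = ((fderiv ℝ fJ (s, z s μ, θ s μ)).comp ιθ) (Pi.single k 1) i := by rw [this]
    simpa [mvCLM_apply, Matrix.mulVec_single] using h3
  -- entrywise continuity of Θμ on Icc
  have cΘ : ∀ i k, ContinuousOn (fun s => Θμ s i k) (Set.Icc 0 S) := by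
    intro i k
    set θJ : ℝ × (Fin nμ → ℝ) → (Fin nθ → ℝ) := fun q => θ q.1 q.2 with hθJ
    set ι2 : (Fin nμ → ℝ) →L[ℝ] ℝ × (Fin nμ → ℝ) :=
      ContinuousLinearMap.prod 0 (ContinuousLinearMap.id ℝ _) with hι2
    have heq : ∀ s ∈ Set.Icc (0:ℝ) S,
        mvCLM (Θμ s) = (fderiv ℝ θJ (s, μ)).comp ι2 := by
      intro s hs
      have h1 : HasFDerivAt (fun μ' : Fin nμ → ℝ => ((s, μ') : ℝ × (Fin nμ → ℝ))) ι2 μ :=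
        (hasFDerivAt_const s _).prodMk (hasFDerivAt_id _)
      have h2 : HasFDerivAt θJ (fderiv ℝ θJ (s, μ)) (s, μ) :=
        (hθ.differentiable one_ne_zero _).hasFDerivAt
      exact (hΘμ s hs).unique (h2.comp μ h1)
    have ccont : Continuous (fun s => ((fderiv ℝ θJ (s, μ)).comp ι2) (Pi.single k 1) i) := by
      apply (continuous_apply i).comp
      exact (((hθ.continuous_fderiv one_ne_zero).comp
        (continuous_id.prodMk continuous_const)).clm_comp continuous_const).clm_apply
        continuous_const
    refine ContinuousOn.congr ccont.continuousOn ?_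
    intro s hs
    have h3 : mvCLM (Θμ s) (Pi.single k 1) i
        = ((fderiv ℝ θJ (s, μ)).comp ι2) (Pi.single k 1) i := by rw [heq s hs]
    simpa [mvCLM_apply, Matrix.mulVec_single] using h3
  -- entrywise continuity of lz on Icc
  have clz : ∀ j, ContinuousOn (fun s => lz s j) (Set.Icc 0 S) := by
    intro j
    set lJ : ℝ × (Fin nz → ℝ) → ℝ := fun q => l q.1 q.2 with hlJ
    set ι2 : (Fin nz → ℝ) →L[ℝ] ℝ × (Fin nz → ℝ) :=
      ContinuousLinearMap.prod 0 (ContinuousLinearMap.id ℝ _) with hι2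
    have heq : ∀ s ∈ Set.Icc (0:ℝ) S,
        dotCLM (lz s) = (fderiv ℝ lJ (s, z s μ)).comp ι2 := by
      intro s hs
      have h1 : HasFDerivAt (fun w : Fin nz → ℝ => ((s, w) : ℝ × (Fin nz → ℝ))) ι2 (z s μ) :=
        (hasFDerivAt_const s _).prodMk (hasFDerivAt_id _)
      have h2 : HasFDerivAt lJ (fderiv ℝ lJ (s, z s μ)) (s, z s μ) :=
        (hl.differentiable one_ne_zero _).hasFDerivAt
      exact (hlz s hs).unique (h2.comp (z s μ) h1)
    have ccont : Continuous (fun s => ((fderiv ℝ lJ (s, z s μ)).comp ι2) (Pi.single j 1)) := by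
      exact (((hl.continuous_fderiv one_ne_zero).comp
        (continuous_id.prodMk cz)).clm_comp continuous_const).clm_apply continuous_const
    refine ContinuousOn.congr ccont.continuousOn ?_
    intro s hs
    have h3 : dotCLM (lz s) (Pi.single j 1)
        = ((fderiv ℝ lJ (s, z s μ)).comp ι2) (Pi.single j 1) := by rw [heq s hs]
    simpa [dotCLM_apply, dotProduct_single] using h3
  -- continuity of the two vector-valued integrands on Icc
  have caFθ : ∀ k, ContinuousOn (fun s => (a s ᵥ* Fθ s) k) (Set.Icc 0 S) := by
    intro k
    simp only [Matrix.vecMul, dotProduct]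
    exact continuousOn_finset_sum _ fun i _ =>
      (((continuous_apply i).comp_continuousOn ca).mul (cFθ i k))
  have cint1 : ContinuousOn (fun τ => (a τ ᵥ* Fθ τ) ᵥ* Θμ τ) (Set.Icc 0 S) := by
    rw [continuousOn_pi]
    intro j
    simp only [Matrix.vecMul, dotProduct]
    exact continuousOn_finset_sum _ fun k _ => (caFθ k).mul (cΘ k j)
  have cint2 : ContinuousOn (fun τ => lz τ ᵥ* v τ) (Set.Icc 0 S) := by
    rw [continuousOn_pi]
    intro j
    simp only [Matrix.vecMul, dotProduct]
    refine continuousOn_finset_sum _ fun i _ => (clz i).mul ?_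
    exact ((continuous_apply j).comp (continuous_apply i)).comp_continuousOn cv
  -- derivative of g(s) = a(s) ᵥ* v(s)
  have hg : ∀ s ∈ Set.Icc (0:ℝ) S,
      HasDerivAt (fun x => a x ᵥ* v x)
        ((a s ᵥ* Fθ s) ᵥ* Θμ s - lz s ᵥ* v s) s := by
    intro s hs
    have h1 : HasDerivAt (fun x => a x ᵥ* v x)
        ((-(a s ᵥ* Fz s) - lz s) ᵥ* v s + a s ᵥ* (Fz s * v s + Fθ s * Θμ s)) s := by
      rw [hasDerivAt_pi]
      intro j
      have hsum : ∀ i : Fin nz, HasDerivAt (fun x => a x i * v x i j)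
          ((-(a s ᵥ* Fz s) - lz s) i * v s i j
            + a s i * (Fz s * v s + Fθ s * Θμ s) i j) s := by
        intro i
        have hai : HasDerivAt (fun x => a x i) ((-(a s ᵥ* Fz s) - lz s) i) s :=
          hasDerivAt_pi.1 (ha s hs) i
        have hvij : HasDerivAt (fun x => v x i j) ((Fz s * v s + Fθ s * Θμ s) i j) s :=
          hasDerivAt_pi.1 (hasDerivAt_pi.1 (hvar s hs) i) j
        exact hai.mul hvij
      have htot := HasDerivAt.fun_sum (u := Finset.univ) (fun i _ => hsum i)
      simp only [Matrix.vecMul, dotProduct, Pi.add_apply]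
      rw [Finset.sum_add_distrib] at htot
      exact htot
    rwa [key_algebra] at h1
  -- FTC: integral identity
  have hint1 : IntervalIntegrable (fun τ => (a τ ᵥ* Fθ τ) ᵥ* Θμ τ) volume 0 S := by
    apply ContinuousOn.intervalIntegrable
    rwa [hIcc]
  have hint2 : IntervalIntegrable (fun τ => lz τ ᵥ* v τ) volume 0 S := by
    apply ContinuousOn.intervalIntegrable
    rwa [hIcc]
  have hFTC : (∫ τ in (0:ℝ)..S, ((a τ ᵥ* Fθ τ) ᵥ* Θμ τ - lz τ ᵥ* v τ))
      = a S ᵥ* v S - a 0 ᵥ* v 0 := by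
    apply intervalIntegral.integral_eq_sub_of_hasDerivAt
    · intro t ht
      rw [hIcc] at ht
      exact hg t ht
    · exact hint1.sub hint2
  have keyInt : (∫ τ in (0:ℝ)..S, (a τ ᵥ* Fθ τ) ᵥ* Θμ τ)
      = Lz ᵥ* v S + ∫ τ in (0:ℝ)..S, lz τ ᵥ* v τ := by
    rw [intervalIntegral.integral_sub hint1 hint2, hv0, Matrix.vecMul_zero, sub_zero, haS]
      at hFTC
    rw [← hFTC]
    abel
  -- derivative of the terminal term
  have hterm : HasFDerivAt (fun μ' => L (z S μ')) (dotCLM (Lz ᵥ* v S)) μ := by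
    have := hLz.comp μ (hv S hSmem)
    rwa [dot_comp_mv] at this
  -- derivative of the integral term via differentiation under the integral
  set Φ : ℝ × (Fin nμ → ℝ) → ℝ := fun q => l q.1 (z q.1 q.2) with hΦdef
  have hΦ : ContDiff ℝ 1 Φ := hl.comp (contDiff_fst.prodMk hz)
  set ι2 : (Fin nμ → ℝ) →L[ℝ] ℝ × (Fin nμ → ℝ) :=
    ContinuousLinearMap.prod 0 (ContinuousLinearMap.id ℝ _) with hι2
  set P : ℝ × (Fin nμ → ℝ) → ((Fin nμ → ℝ) →L[ℝ] ℝ) :=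
    fun q => (fderiv ℝ Φ q).comp ι2 with hPdef
  have hP : ∀ (t : ℝ) (x : Fin nμ → ℝ), HasFDerivAt (fun y => Φ (t, y)) (P (t, x)) x := by
    intro t x
    have h1 : HasFDerivAt (fun y : Fin nμ → ℝ => ((t, y) : ℝ × (Fin nμ → ℝ))) ι2 x :=
      (hasFDerivAt_const t _).prodMk (hasFDerivAt_id _)
    exact ((hΦ.differentiable one_ne_zero _).hasFDerivAt).comp x h1
  have cP : Continuous P := (hΦ.continuous_fderiv one_ne_zero).clm_comp continuous_const
  obtain ⟨C, hC⟩ := (((isCompact_Icc : IsCompact (Set.Icc (0:ℝ) S)).prod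
    (isCompact_closedBall μ 1)).exists_bound_of_continuousOn cP.continuousOn)
  have hIoc : Set.uIoc (0:ℝ) S ⊆ Set.Icc 0 S := by
    rw [Set.uIoc_of_le hS.le]
    exact Set.Ioc_subset_Icc_self
  have hdi : HasFDerivAt (fun x : Fin nμ → ℝ => ∫ t in (0:ℝ)..S, Φ (t, x))
      (∫ t in (0:ℝ)..S, P (t, μ)) μ := by
    apply intervalIntegral.hasFDerivAt_integral_of_dominated_of_fderiv_le
      (F' := fun x t => P (t, x)) (bound := fun _ => C) (s := Metric.ball μ 1) (Metric.ball_mem_nhds μ one_pos)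
    · filter_upwards with x
      exact (hΦ.continuous.comp (continuous_id.prodMk continuous_const)).aestronglyMeasurable
    · exact (hΦ.continuous.comp (continuous_id.prodMk continuous_const)).intervalIntegrable 0 S
    · exact (cP.comp (continuous_id.prodMk continuous_const)).aestronglyMeasurable
    · filter_upwards with t ht x hx
      exact hC (t, x) ⟨hIoc ht, Metric.ball_subset_closedBall hx⟩
    · exact intervalIntegrable_const
    · filter_upwards with t ht x hx
      exact hP t x
  -- identify the derivative of the integral term
  have hPeq : ∀ t ∈ Set.Icc (0:ℝ) S, P (t, μ) = dotCLM (lz t ᵥ* v t) := by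
    intro t ht
    have h2 : HasFDerivAt (fun y => Φ (t, y)) ((dotCLM (lz t)).comp (mvCLM (v t))) μ :=
      (hlz t ht).comp μ (hv t ht)
    rw [← dot_comp_mv]
    exact (hP t μ).unique h2
  have hintP : (∫ t in (0:ℝ)..S, P (t, μ)) = dotCLM (∫ τ in (0:ℝ)..S, lz τ ᵥ* v τ) := by
    have h1 : (∫ t in (0:ℝ)..S, P (t, μ)) = ∫ t in (0:ℝ)..S, dotCLM (lz t ᵥ* v t) := by
      apply intervalIntegral.integral_congr
      intro t ht
      rw [hIcc] at ht
      exact hPeq t ht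
    have h2 : (∫ t in (0:ℝ)..S, (dotCLML nμ) (lz t ᵥ* v t))
        = (dotCLML nμ) (∫ τ in (0:ℝ)..S, lz τ ᵥ* v τ) :=
      ContinuousLinearMap.intervalIntegral_comp_comm _ hint2
    rw [h1]
    exact h2
  -- combine
  have hsum := hterm.add hdi
  rw [hintP] at hsum
  have : dotCLM (Lz ᵥ* v S) + dotCLM (∫ τ in (0:ℝ)..S, lz τ ᵥ* v τ)
      = dotCLM (∫ τ in (0:ℝ)..S, (a τ ᵥ* Fθ τ) ᵥ* Θμ τ) := by
    rw [keyInt, dotCLM_add]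
  rw [this] at hsum
  exact hsum
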